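/- A function φ : X → ℂ on the p-compactification X = M ⊔ N is continuous if and only if (a) φ|_M and φ|_N are continuous, and (b) for every n ∈ N and ε > 0 there exist an open neighborhood E of n in N and a compact K ⊆ M such that |φ(m) − φ(n)| ≤ ε for all m ∈ M^out with p(m) ∈ E and m ∉ K. -/
import Mathlib


open TopologicalSpace Set

def pcA {M N : Type*} (p : M → N) (Mout : Set M) (E : Set N) (K : Set M) : Set (M ⊕ N) :=
  Sum.inl '' (Mout ∩ p ⁻¹' E ∩ Kᶜ) ∪ Sum.inr '' E

def pcBase {M N : Type*} [TopologicalSpace M] [TopologicalSpace N]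
    (p : M → N) (Mout : Set M) : Set (Set (M ⊕ N)) :=
  {s | ∃ O : Set M, IsOpen O ∧ s = Sum.inl '' O} ∪
    {s | ∃ (E : Set N) (K : Set M), IsOpen E ∧ IsCompact K ∧ s = pcA p Mout E K}

lemma inr_mem_pcA {M N : Type*} {p : M → N} {Mout : Set M} {E : Set N} {K : Set M}
    {n : N} : Sum.inr n ∈ pcA p Mout E K ↔ n ∈ E := by
  simp [pcA]

lemma inl_mem_pcA {M N : Type*} {p : M → N} {Mout : Set M} {E : Set N} {K : Set M}
    {m : M} : Sum.inl m ∈ pcA p Mout E K ↔ m ∈ Mout ∧ p m ∈ E ∧ m ∉ K := by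
  constructor
  · rintro (⟨m', hm', h⟩ | ⟨n, _, h⟩)
    · obtain rfl : m' = m := Sum.inl_injective h
      exact ⟨hm'.1.1, hm'.1.2, hm'.2⟩
    · exact absurd h (by simp)
  · rintro ⟨h1, h2, h3⟩
    exact Or.inl ⟨m, ⟨⟨h1, h2⟩, h3⟩, rfl⟩

lemma pcA_inter {M N : Type*} (p : M → N) (Mout : Set M)
    {E E' : Set N} {K K' : Set M} :
    pcA p Mout (E ∩ E') (K ∪ K') ⊆ pcA p Mout E K ∩ pcA p Mout E' K' := by
  rintro (m | n) hx
  · rw [inl_mem_pcA] at hx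
    simp only [mem_inter_iff, inl_mem_pcA]
    simp only [mem_inter_iff, mem_preimage, mem_union] at hx
    tauto
  · rw [inr_mem_pcA] at hx
    simp only [mem_inter_iff, inr_mem_pcA]
    exact hx

lemma exists_pcA_subset {M N : Type*} [TopologicalSpace M] [TopologicalSpace N]
    (p : M → N) (Mout : Set M) {U : Set (M ⊕ N)}
    (hU : GenerateOpen (pcBase p Mout) U) {n : N} (hn : Sum.inr n ∈ U) :
    ∃ (E : Set N) (K : Set M), IsOpen E ∧ n ∈ E ∧ IsCompact K ∧ pcA p Mout E K ⊆ U := by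
  induction hU with
  | basic s hs =>
    rcases hs with ⟨O, _, rfl⟩ | ⟨E, K, hE, hK, rfl⟩
    · rcases hn with ⟨m, _, hm⟩; exact absurd hm (by simp)
    · exact ⟨E, K, hE, inr_mem_pcA.mp hn, hK, subset_rfl⟩
  | univ => exact ⟨univ, ∅, isOpen_univ, mem_univ n, isCompact_empty, subset_univ _⟩
  | inter u v _ _ ihu ihv =>
    obtain ⟨E, K, hE, hnE, hK, hsub⟩ := ihu hn.1
    obtain ⟨E', K', hE', hnE', hK', hsub'⟩ := ihv hn.2
    exact ⟨E ∩ E', K ∪ K', hE.inter hE', ⟨hnE, hnE'⟩, hK.union hK',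
      fun x hx => ⟨hsub (pcA_inter p Mout hx).1, hsub' (pcA_inter p Mout hx).2⟩⟩
  | sUnion S _ ih =>
    rcases hn with ⟨t, htS, hnt⟩
    obtain ⟨E, K, hE, hnE, hK, hsub⟩ := ih t htS hnt
    exact ⟨E, K, hE, hnE, hK, hsub.trans (subset_sUnion_of_mem htS)⟩

/-- **Remark 4.4.** A function `φ : X → ℂ` on the `p`-compactification `X = M ⊔ N` is
continuous iff (a) its restrictions to `M` and to `N` are continuous, and (b) for every
`n ∈ N` and `ε > 0` there are an open neighborhood `E` of `n` in `N` and a compact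
`K ⊆ M` such that `|φ(m) − φ(n)| ≤ ε` whenever `m ∈ M^out`, `p(m) ∈ E` and `m ∉ K`. -/
theorem stmt8 {M N : Type*} [TopologicalSpace M] [TopologicalSpace N]
    [T2Space M] [LocallyCompactSpace M] [SecondCountableTopology M]
    [T2Space N] [CompactSpace N] [SecondCountableTopology N]
    (Min : Set M) (hMin : IsCompact Min)
    (p : M → N) (hp : ContinuousOn p Minᶜ)
    (hsurj : ∀ n : N, ∃ m ∈ Minᶜ, p m = n)
    (hfib : ∀ n : N, ¬ IsCompact {m | m ∈ Minᶜ ∧ p m = n})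
    (φ : M ⊕ N → ℂ) :
    @Continuous (M ⊕ N) ℂ (generateFrom (pcBase p Minᶜ)) _ φ ↔
      (Continuous (fun m : M => φ (Sum.inl m)) ∧
        Continuous (fun n : N => φ (Sum.inr n)) ∧
        ∀ n : N, ∀ ε > (0 : ℝ), ∃ (E : Set N) (K : Set M),
          IsOpen E ∧ n ∈ E ∧ IsCompact K ∧
          ∀ m ∈ Minᶜ, p m ∈ E → m ∉ K →
            ‖φ (Sum.inl m) - φ (Sum.inr n)‖ ≤ ε) := by
  letI τ : TopologicalSpace (M ⊕ N) := generateFrom (pcBase p Minᶜ)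
  have hinl : Continuous (Sum.inl : M → M ⊕ N) := by
    rw [continuous_generateFrom_iff]
    rintro s (⟨O, hO, rfl⟩ | ⟨E, K, hE, hK, rfl⟩)
    · rwa [Sum.inl_injective.preimage_image]
    · have : Sum.inl ⁻¹' (pcA p Minᶜ E K) = Minᶜ ∩ p ⁻¹' E ∩ Kᶜ := by
        ext m; simp [inl_mem_pcA, and_assoc]
      rw [this]
      exact (hp.isOpen_inter_preimage hMin.isClosed.isOpen_compl hE).inter
        hK.isClosed.isOpen_compl
  have hinr : Continuous (Sum.inr : N → M ⊕ N) := by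
    rw [continuous_generateFrom_iff]
    rintro s (⟨O, hO, rfl⟩ | ⟨E, K, hE, hK, rfl⟩)
    · have : Sum.inr ⁻¹' (Sum.inl '' O) = (∅ : Set N) := by ext n; simp
      rw [this]; exact isOpen_empty
    · have : Sum.inr ⁻¹' (pcA p Minᶜ E K) = E := by ext n; simp [inr_mem_pcA]
      rw [this]; exact hE
  constructor
  · intro hφ
    refine ⟨hφ.comp hinl, hφ.comp hinr, fun n ε hε => ?_⟩
    have hU : IsOpen (φ ⁻¹' Metric.ball (φ (Sum.inr n)) ε) :=
      hφ.isOpen_preimage _ Metric.isOpen_ball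
    have hgo : GenerateOpen (pcBase p Minᶜ) (φ ⁻¹' Metric.ball (φ (Sum.inr n)) ε) := hU
    have hmem : Sum.inr n ∈ φ ⁻¹' Metric.ball (φ (Sum.inr n)) ε := by
      simp [Metric.mem_ball, hε]
    obtain ⟨E, K, hE, hnE, hK, hsub⟩ := exists_pcA_subset p Minᶜ hgo hmem
    refine ⟨E, K, hE, hnE, hK, fun m hm hpm hmK => ?_⟩
    have : Sum.inl m ∈ pcA p Minᶜ E K := inl_mem_pcA.mpr ⟨hm, hpm, hmK⟩
    have := hsub this
    rw [mem_preimage, Metric.mem_ball, dist_eq_norm] at this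
    exact this.le
  · rintro ⟨h1, h2, h3⟩
    rw [continuous_def]
    intro U hU
    have key : ∀ x ∈ φ ⁻¹' U, ∃ s ∈ pcBase p Minᶜ, x ∈ s ∧ s ⊆ φ ⁻¹' U := by
      rintro (m | n) hx
      · have hO : IsOpen ((fun m : M => φ (Sum.inl m)) ⁻¹' U) := h1.isOpen_preimage U hU
        refine ⟨Sum.inl '' ((fun m : M => φ (Sum.inl m)) ⁻¹' U),
          Or.inl ⟨_, hO, rfl⟩, ⟨m, hx, rfl⟩, ?_⟩
        rintro x ⟨m', hm', rfl⟩
        exact hm'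
      · obtain ⟨ε, hε, hball⟩ := Metric.isOpen_iff.mp hU _ hx
        obtain ⟨E, K, hE, hnE, hK, hφE⟩ := h3 n (ε / 2) (by linarith)
        set E' : Set N := (fun n : N => φ (Sum.inr n)) ⁻¹' Metric.ball (φ (Sum.inr n)) ε
        have hE' : IsOpen E' := h2.isOpen_preimage _ Metric.isOpen_ball
        have hnE' : n ∈ E' := by simp [E', Metric.mem_ball, hε]
        refine ⟨pcA p Minᶜ (E ∩ E') K, Or.inr ⟨E ∩ E', K, hE.inter hE', hK, rfl⟩,
          inr_mem_pcA.mpr ⟨hnE, hnE'⟩, ?_⟩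
        rintro (m | n') hx'
        · rw [inl_mem_pcA] at hx'
          refine hball ?_
          rw [Metric.mem_ball, dist_eq_norm]
          calc ‖φ (Sum.inl m) - φ (Sum.inr n)‖ ≤ ε / 2 :=
                hφE m hx'.1 hx'.2.1.1 hx'.2.2
            _ < ε := by linarith
        · rw [inr_mem_pcA] at hx'
          exact hball hx'.2
    have : φ ⁻¹' U = ⋃₀ {s | s ∈ pcBase p Minᶜ ∧ s ⊆ φ ⁻¹' U} := by
      apply Subset.antisymm
      · intro x hx
        obtain ⟨s, hs, hxs, hsub⟩ := key x hx
        exact ⟨s, ⟨hs, hsub⟩, hxs⟩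
      · rintro x ⟨s, ⟨_, hsub⟩, hxs⟩
        exact hsub hxs
    rw [this]
    exact isOpen_sUnion fun s hs => isOpen_generateFrom_of_mem hs.1
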